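/- Σ_{I, J ∈ S_min, I ≠ J} μ(I)μ(J)·T(sup(I, J))² = Σ_{J ∈ S \ S_min} T(J)²·μ(J)²·(1 − p_J⁻¹). -/

import Mathlib

open scoped Classical

open Finset

section Aux
set_option linter.unusedSectionVars false
variable {S : Type*} [Fintype S] [SemilatticeSup S]

lemma exists_child' {x L : S} (h : x < L) : ∃ C, x ≤ C ∧ C ⋖ L := by
  obtain ⟨C, hC, hmax⟩ := (univ.filter (fun y => x ≤ y ∧ y < L)).exists_maximal
    ⟨x, by simp [h]⟩
  rw [mem_filter] at hC
  refine ⟨C, hC.2.1, hC.2.2, fun y hy hyL => ?_⟩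
  exact lt_irrefl _ (hy.trans_le (hmax (mem_filter.2 ⟨mem_univ _, hC.2.1.trans hy.le, hyL⟩) hy.le))

lemma child_unique' (hchain : ∀ x y z : S, x ≤ y → x ≤ z → y ≤ z ∨ z ≤ y)
    {x L C C' : S} (h1 : x ≤ C) (h2 : C ⋖ L) (h3 : x ≤ C') (h4 : C' ⋖ L) : C = C' := by
  rcases hchain x C C' h1 h3 with h | h
  · exact h.eq_or_lt.resolve_right fun hlt => h2.2 hlt h4.1
  · exact (h.eq_or_lt.resolve_right fun hlt => h4.2 hlt h2.1).symm

lemma sum_min_below (hchain : ∀ x y z : S, x ≤ y → x ≤ z → y ≤ z ∨ z ≤ y)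
    (p : S → ℕ) (hp : ∀ L : S, ¬ IsMin L → 2 ≤ p L)
    (hcard : ∀ L : S, ¬ IsMin L →
      (Finset.univ.filter (fun J : S => J ⋖ L)).card = p L)
    (μ : S → ℝ) (hμ : ∀ L J : S, J ⋖ L → μ J = μ L / p L) :
    ∀ L : S, ∑ I ∈ univ.filter (fun I => IsMin I ∧ I ≤ L), μ I = μ L := by
  intro L
  induction L using WellFoundedLT.induction with
  | _ L IH =>
    by_cases hL : IsMin L
    · have hset : univ.filter (fun I => IsMin I ∧ I ≤ L) = {L} := by
        ext I
        simp only [mem_filter, mem_univ, true_and, mem_singleton]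
        constructor
        · rintro ⟨hI, hIL⟩; exact le_antisymm hIL (hL hIL)
        · rintro rfl; exact ⟨hL, le_rfl⟩
      rw [hset, sum_singleton]
    · choose! g hg1 hg2 using fun (x : S) (h : x < L) => exists_child' h
      have hmaps : ∀ I ∈ univ.filter (fun I => IsMin I ∧ I ≤ L),
          g I ∈ univ.filter (fun C => C ⋖ L) := by
        intro I hI
        rw [mem_filter] at hI
        have hIL : I < L := hI.2.2.lt_of_ne (by rintro rfl; exact hL hI.2.1)
        exact mem_filter.2 ⟨mem_univ _, hg2 I hIL⟩
      rw [← Finset.sum_fiberwise_of_maps_to hmaps μ]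
      have hfib : ∀ C ∈ univ.filter (fun C => C ⋖ L),
          ((univ.filter (fun I => IsMin I ∧ I ≤ L)).filter (fun I => g I = C))
            = univ.filter (fun I => IsMin I ∧ I ≤ C) := by
        intro C hC
        have hCL : C ⋖ L := (mem_filter.1 hC).2
        ext I
        simp only [mem_filter, mem_univ, true_and]
        constructor
        · rintro ⟨⟨hIm, hIL⟩, rfl⟩
          exact ⟨hIm, hg1 I (hIL.lt_of_ne (by rintro rfl; exact hL hIm))⟩
        · rintro ⟨hIm, hIC⟩
          have hIL : I < L := lt_of_le_of_lt hIC hCL.lt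
          exact ⟨⟨hIm, hIL.le⟩, child_unique' hchain (hg1 I hIL) (hg2 I hIL) hIC hCL⟩
      rw [Finset.sum_congr rfl fun C hC => by
        rw [hfib C hC, IH C (mem_filter.1 hC).2.lt, hμ L C (mem_filter.1 hC).2]]
      rw [Finset.sum_const, hcard L hL, nsmul_eq_mul]
      have hpL : (p L : ℝ) ≠ 0 := by
        have := hp L hL; positivity
      field_simp

lemma key_pairs (hchain : ∀ x y z : S, x ≤ y → x ≤ z → y ≤ z ∨ z ≤ y)
    (p : S → ℕ) (hp : ∀ L : S, ¬ IsMin L → 2 ≤ p L)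
    (hcard : ∀ L : S, ¬ IsMin L →
      (Finset.univ.filter (fun J : S => J ⋖ L)).card = p L)
    (μ : S → ℝ) (hμ : ∀ L J : S, J ⋖ L → μ J = μ L / p L)
    (L : S) (hL : ¬ IsMin L) :
    ∑ q ∈ (univ.filter (fun q : S × S =>
        IsMin q.1 ∧ IsMin q.2 ∧ q.1 ≠ q.2)).filter (fun q => q.1 ⊔ q.2 = L),
      μ q.1 * μ q.2 = μ L ^ 2 * (1 - (p L : ℝ)⁻¹) := by
  have key := sum_min_below hchain p hp hcard μ hμ
  have hprod : ∀ x : S, ∑ q ∈ (univ.filter (fun I => IsMin I ∧ I ≤ x)) ×ˢ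
      (univ.filter (fun I => IsMin I ∧ I ≤ x)), μ q.1 * μ q.2 = μ x ^ 2 := by
    intro x
    rw [Finset.sum_product, ← Finset.sum_mul_sum, key, sq]
  set R : Finset (S × S) := univ.filter
      (fun q : S × S => (IsMin q.1 ∧ q.1 ≤ L) ∧ (IsMin q.2 ∧ q.2 ≤ L)) with hR
  have hRprod : R = (univ.filter (fun I => IsMin I ∧ I ≤ L)) ×ˢ
      (univ.filter (fun I => IsMin I ∧ I ≤ L)) := by
    ext q; simp [hR, Finset.mem_product]
  have hsplit := Finset.sum_filter_add_sum_filter_not R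
    (fun q => q.1 ⊔ q.2 = L) (fun q => μ q.1 * μ q.2)
  have hfil : R.filter (fun q => q.1 ⊔ q.2 = L) =
      (univ.filter (fun q : S × S =>
        IsMin q.1 ∧ IsMin q.2 ∧ q.1 ≠ q.2)).filter (fun q => q.1 ⊔ q.2 = L) := by
    ext q
    simp only [hR, mem_filter, mem_univ, true_and]
    constructor
    · rintro ⟨⟨⟨h1, -⟩, h2, -⟩, hsup⟩
      refine ⟨⟨h1, h2, fun heq => hL ?_⟩, hsup⟩
      rw [← hsup, heq, sup_idem]
      exact h2
    · rintro ⟨⟨h1, h2, -⟩, hsup⟩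
      exact ⟨⟨⟨h1, hsup ▸ le_sup_left⟩, h2, hsup ▸ le_sup_right⟩, hsup⟩
  -- the complement: pairs whose sup is strictly below L, fibered by children
  choose! g hg1 hg2 using fun (x : S) (h : x < L) => exists_child' h
  have hmaps : ∀ q ∈ R.filter (fun q => ¬ q.1 ⊔ q.2 = L),
      g (q.1 ⊔ q.2) ∈ univ.filter (fun C => C ⋖ L) := by
    intro q hq
    simp only [hR, mem_filter, mem_univ, true_and] at hq
    have hlt : q.1 ⊔ q.2 < L := (sup_le hq.1.1.2 hq.1.2.2).lt_of_ne hq.2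
    exact mem_filter.2 ⟨mem_univ _, hg2 _ hlt⟩
  have hcompl : ∑ q ∈ R.filter (fun q => ¬ q.1 ⊔ q.2 = L), μ q.1 * μ q.2
      = (p L : ℝ) * (μ L / p L) ^ 2 := by
    rw [← Finset.sum_fiberwise_of_maps_to hmaps (fun q => μ q.1 * μ q.2)]
    have hfib : ∀ C ∈ univ.filter (fun C => C ⋖ L),
        (R.filter (fun q => ¬ q.1 ⊔ q.2 = L)).filter (fun q => g (q.1 ⊔ q.2) = C)
          = (univ.filter (fun I => IsMin I ∧ I ≤ C)) ×ˢ
            (univ.filter (fun I => IsMin I ∧ I ≤ C)) := by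
      intro C hC
      have hCL : C ⋖ L := (mem_filter.1 hC).2
      ext q
      simp only [hR, Finset.mem_product, mem_filter, mem_univ, true_and]
      constructor
      · rintro ⟨⟨⟨⟨h1, h1L⟩, h2, h2L⟩, hne⟩, rfl⟩
        have hlt : q.1 ⊔ q.2 < L := (sup_le h1L h2L).lt_of_ne hne
        have := hg1 _ hlt
        exact ⟨⟨h1, le_sup_left.trans this⟩, h2, le_sup_right.trans this⟩
      · rintro ⟨⟨h1, h1C⟩, h2, h2C⟩
        have hsC : q.1 ⊔ q.2 ≤ C := sup_le h1C h2C
        have hlt : q.1 ⊔ q.2 < L := lt_of_le_of_lt hsC hCL.lt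
        refine ⟨⟨⟨⟨h1, h1C.trans hCL.le⟩, h2, h2C.trans hCL.le⟩, hlt.ne⟩, ?_⟩
        exact child_unique' hchain (hg1 _ hlt) (hg2 _ hlt) hsC hCL
    rw [Finset.sum_congr rfl fun C hC => by
      rw [hfib C hC, hprod C, hμ L C (mem_filter.1 hC).2]]
    rw [Finset.sum_const, hcard L hL, nsmul_eq_mul]
  have hRsum : ∑ q ∈ R, μ q.1 * μ q.2 = μ L ^ 2 := by rw [hRprod, hprod]
  have hpL : (p L : ℝ) ≠ 0 := by have := hp L hL; positivity
  have : ∑ q ∈ (univ.filter (fun q : S × S =>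
        IsMin q.1 ∧ IsMin q.2 ∧ q.1 ≠ q.2)).filter (fun q => q.1 ⊔ q.2 = L),
      μ q.1 * μ q.2 = μ L ^ 2 - (p L : ℝ) * (μ L / p L) ^ 2 := by
    rw [← hfil, eq_sub_iff_add_eq, ← hcompl] at *
    rw [hsplit, hRsum]
  rw [this]
  field_simp

end Aux

/-- In a finite directed tree `S` (finite partial order with greatest element `K`,
binary suprema, totally ordered up-sets), where every non-minimal vertex `L`
has exactly `p L ≥ 2` children and the weight `μ` satisfies `μ K > 0` and
`μ J = μ L / p L` for every child `J` of `L`, and `T : S → ℝ` is arbitrary: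
`Σ_{I,J ∈ S_min, I ≠ J} μ(I) μ(J) T(sup(I,J))²
  = Σ_{J ∈ S \ S_min} T(J)² μ(J)² (1 − p_J⁻¹)`. -/
theorem trace_replica_matrix_squared
    {S : Type*} [Fintype S] [SemilatticeSup S]
    (K : S) (hK : ∀ x : S, x ≤ K)
    (hchain : ∀ x y z : S, x ≤ y → x ≤ z → y ≤ z ∨ z ≤ y)
    (p : S → ℕ) (hp : ∀ L : S, ¬ IsMin L → 2 ≤ p L)
    (hcard : ∀ L : S, ¬ IsMin L →
      (Finset.univ.filter (fun J : S => J ⋖ L)).card = p L)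
    (μ : S → ℝ) (hμK : 0 < μ K)
    (hμ : ∀ L J : S, J ⋖ L → μ J = μ L / p L)
    (T : S → ℝ) :
    ∑ I ∈ Finset.univ.filter (fun I : S => IsMin I),
      ∑ J ∈ Finset.univ.filter (fun J : S => IsMin J ∧ J ≠ I),
        μ I * μ J * T (I ⊔ J) ^ 2 =
      ∑ J ∈ Finset.univ.filter (fun J : S => ¬ IsMin J),
        T J ^ 2 * μ J ^ 2 * (1 - (p J : ℝ)⁻¹) := by
  classical
  set Q : Finset (S × S) := univ.filter
    (fun q : S × S => IsMin q.1 ∧ IsMin q.2 ∧ q.1 ≠ q.2) with hQ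
  have hLHS : ∑ I ∈ Finset.univ.filter (fun I : S => IsMin I),
      ∑ J ∈ Finset.univ.filter (fun J : S => IsMin J ∧ J ≠ I),
        μ I * μ J * T (I ⊔ J) ^ 2
      = ∑ q ∈ Q, μ q.1 * μ q.2 * T (q.1 ⊔ q.2) ^ 2 := by
    rw [hQ, Finset.sum_filter, Finset.sum_filter, Fintype.sum_prod_type]
    refine Finset.sum_congr rfl fun I _ => ?_
    by_cases hI : IsMin I
    · rw [if_pos hI, Finset.sum_filter]
      refine Finset.sum_congr rfl fun J _ => ?_
      refine if_congr ⟨fun h => ⟨hI, h.1, Ne.symm h.2⟩, fun h => ⟨h.2.1, Ne.symm h.2.2⟩⟩ rfl rfl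
    · rw [if_neg hI]
      simp [hI]
  rw [hLHS]
  have hsup : ∀ q ∈ Q, q.1 ⊔ q.2 ∈ univ.filter (fun L : S => ¬ IsMin L) := by
    intro q hq
    rw [hQ, mem_filter] at hq
    obtain ⟨-, h1, h2, h3⟩ := hq
    refine mem_filter.2 ⟨mem_univ _, fun hmin => h3 ?_⟩
    have h21 : q.2 ≤ q.1 := le_sup_right.trans (hmin le_sup_left)
    exact le_antisymm (h1 h21) h21
  rw [← Finset.sum_fiberwise_of_maps_to hsup (fun q => μ q.1 * μ q.2 * T (q.1 ⊔ q.2) ^ 2)]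
  refine Finset.sum_congr rfl fun L hL => ?_
  have hLmin : ¬ IsMin L := (mem_filter.1 hL).2
  have hTc : ∑ q ∈ Q.filter (fun q => q.1 ⊔ q.2 = L), μ q.1 * μ q.2 * T (q.1 ⊔ q.2) ^ 2
      = ∑ q ∈ Q.filter (fun q => q.1 ⊔ q.2 = L), μ q.1 * μ q.2 * T L ^ 2 :=
    Finset.sum_congr rfl fun q hq => by rw [(mem_filter.1 hq).2]
  rw [hTc, ← Finset.sum_mul, key_pairs hchain p hp hcard μ hμ L hLmin]
  ring
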